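/- Let F : Θ → ℝ^m be continuous on a compact metric space Θ, let (ε_n) be a sequence of random vectors in ℝ^m with ε_n → 0 a.s., and let Q_n(θ) = ‖F(θ₀) - F(θ) + ε_n‖². If θ̂_n minimizes Q_n over Θ, then a.s. every limit point θ* of (θ̂_n) satisfies F(θ*) = F(θ₀). -/

import Mathlib

open MeasureTheory Filter Topology

/-- abstract least-squares consistency lemma. Let `F : Θ → ℝ^m` be
continuous on a compact metric space `Θ`, let `ε n` be random vectors with
`ε n → 0` a.s., and let `θhat n` minimize `θ ↦ ‖F θ₀ - F θ + ε n‖²` over `Θ`. Then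
almost surely every limit point `θ*` of `(θhat n)` satisfies `F θ* = F θ₀`. -/
theorem abstract_least_squares_consistency
    {Θ : Type*} [MetricSpace Θ] [CompactSpace Θ]
    {Ω : Type*} [MeasurableSpace Ω] (P : Measure Ω)
    (m : ℕ) (F : Θ → EuclideanSpace ℝ (Fin m)) (hF : Continuous F)
    (θ₀ : Θ)
    (ε : ℕ → Ω → EuclideanSpace ℝ (Fin m))
    (hε : ∀ᵐ ω ∂P, Tendsto (fun n => ε n ω) atTop (𝓝 0))
    (θhat : ℕ → Ω → Θ)
    (hmin : ∀ n ω, ∀ θ : Θ,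
      ‖F θ₀ - F (θhat n ω) + ε n ω‖ ^ 2 ≤ ‖F θ₀ - F θ + ε n ω‖ ^ 2) :
    ∀ᵐ ω ∂P, ∀ θstar : Θ,
      MapClusterPt θstar atTop (fun n => θhat n ω) → F θstar = F θ₀ := by
  filter_upwards [hε] with ω hω θstar hcp
  have key : ∀ n, ‖F θ₀ - F (θhat n ω)‖ ≤ 2 * ‖ε n ω‖ := by
    intro n
    have h1 := hmin n ω θ₀
    simp only [sub_self, zero_add] at h1
    have h2 : ‖F θ₀ - F (θhat n ω) + ε n ω‖ ≤ ‖ε n ω‖ := by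
      nlinarith [norm_nonneg (F θ₀ - F (θhat n ω) + ε n ω), norm_nonneg (ε n ω)]
    calc ‖F θ₀ - F (θhat n ω)‖ = ‖(F θ₀ - F (θhat n ω) + ε n ω) - ε n ω‖ := by
          rw [add_sub_cancel_right]
      _ ≤ ‖F θ₀ - F (θhat n ω) + ε n ω‖ + ‖ε n ω‖ := norm_sub_le _ _
      _ ≤ 2 * ‖ε n ω‖ := by linarith
  have hdist : ∀ c : ℝ, 0 < c → ‖F θ₀ - F θstar‖ ≤ c := by
    intro c hc
    have hcont : ∀ᶠ θ in 𝓝 θstar, ‖F θ - F θstar‖ < c / 2 := by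
      have := (hF.tendsto θstar).eventually_mem
        (Metric.ball_mem_nhds (F θstar) (by positivity : (0:ℝ) < c / 2))
      filter_upwards [this] with θ hθ
      simpa [dist_eq_norm] using hθ
    have hε' : ∀ᶠ n in atTop, 2 * ‖ε n ω‖ < c / 2 := by
      have h2 : Tendsto (fun n => 2 * ‖ε n ω‖) atTop (𝓝 0) := by
        simpa using hω.norm.const_mul 2
      exact h2.eventually_lt_const (by positivity : (0:ℝ) < c / 2)
    have hfreq : ∃ᶠ n in atTop, θhat n ω ∈ {θ | ‖F θ - F θstar‖ < c / 2} := by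
      exact (mapClusterPt_iff_frequently.mp hcp) _ (hcont)
    obtain ⟨n, hn1, hn2⟩ := (hfreq.and_eventually hε').exists
    calc ‖F θ₀ - F θstar‖ ≤ ‖F θ₀ - F (θhat n ω)‖ + ‖F (θhat n ω) - F θstar‖ := by
          simpa using norm_sub_le_norm_sub_add_norm_sub (F θ₀) (F (θhat n ω)) (F θstar)
      _ ≤ c := by have := key n; simp only [Set.mem_setOf_eq] at hn1; linarith
  have h0 : ‖F θ₀ - F θstar‖ ≤ 0 :=
    le_of_forall_pos_le_add fun c hc => by simpa using hdist c hc
  have := le_antisymm h0 (norm_nonneg _)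
  rw [norm_eq_zero, sub_eq_zero] at this
  exact this.symm
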